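/- Every positive eigenvalue of the adjacency matrix of a threshold graph is strictly greater than (−1+√2)/2. -/
import Mathlib

noncomputable def tgAux : ℝ := Real.sqrt 2 / 2

lemma tgAux_pos : 0 < tgAux := by
  have : 0 < Real.sqrt 2 := Real.sqrt_pos.mpr (by norm_num)
  unfold tgAux; linarith

lemma tgAux_sq : tgAux * tgAux = 1/2 := by
  unfold tgAux
  rw [div_mul_div_comm, Real.mul_self_sqrt (by norm_num : (0:ℝ) ≤ 2)]
  norm_num

def TC1 (μ s T : ℝ) : Prop := s*T ≤ 0 ∧ 0 ≤ s*((tgAux - μ)*T + μ*tgAux*s)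
def TC2 (μ s T : ℝ) : Prop := 0 ≤ s*(T - tgAux*s) ∧ s*(μ*T - s) ≤ 0
def TC3 (s T : ℝ) : Prop := s*(T + s) ≤ 0
def TP (μ s T : ℝ) : Prop := s ≠ 0 ∧ (TC1 μ s T ∨ TC2 μ s T ∨ TC3 s T)

lemma keyU (μ s T : ℝ) (hμ : 0 < μ) (hμg : μ < tgAux) (hs : s ≠ 0)
    (h : TC1 μ s T ∨ TC2 μ s T ∨ TC3 s T) :
    μ * s - T ≠ 0 ∧ (μ*s - T)*T ≤ 0 ∧ 0 ≤ (μ*s - T)*(tgAux*s - T) := by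
  have hss : 0 < s * s := mul_self_pos.mpr hs
  have htg := tgAux_pos
  rcases h with ⟨h1, h2⟩ | ⟨h1, h2⟩ | h1
  · refine ⟨?_, ?_, ?_⟩
    · intro h0
      have hT : T = μ * s := by linarith
      rw [hT] at h1
      nlinarith [hss]
    · nlinarith [h1, hμ, sq_nonneg T]
    · nlinarith [h1, mul_pos hμ htg, hss, sq_nonneg T]
  · have hsT : 0 ≤ s * T := by nlinarith [h1, mul_pos htg hss]
    refine ⟨?_, ?_, ?_⟩
    · intro h0
      have hT : T = μ * s := by linarith
      rw [hT] at h1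
      nlinarith [hss, hμg]
    · nlinarith [mul_nonneg hsT h1, hss, mul_nonneg hss.le hsT, hμg]
    · have hA : 0 ≤ s*(T - μ*s) := by nlinarith [h1, hss, hμg]
      nlinarith [mul_nonneg hA h1, hss]
  · have h1' : s*(T + s) ≤ 0 := h1
    refine ⟨?_, ?_, ?_⟩
    · intro h0
      have hT : T = μ * s := by linarith
      rw [hT] at h1'
      nlinarith [hss, hμ]
    · nlinarith [h1', hμ, hss, sq_nonneg T]
    · nlinarith [h1', mul_pos hμ htg, hss, sq_nonneg T, htg, hμ]

lemma step0 (μ s T s' : ℝ) (hμ : 0 < μ) (hμg : μ < tgAux)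
    (hP : TP μ s T) (hs' : μ * s' = μ * s - T) : TP μ s' T := by
  obtain ⟨hs, hC⟩ := hP
  obtain ⟨hu0, hu1, hu2⟩ := keyU μ s T hμ hμg hs hC
  have hs'0 : s' ≠ 0 := by
    intro h0; rw [h0, mul_zero] at hs'; exact hu0 (by linarith)
  refine ⟨hs'0, Or.inl ⟨?_, ?_⟩⟩
  · have he : μ*(s'*T) = (μ*s - T)*T := by linear_combination T * hs'
    nlinarith [he, hu1, hμ]
  · have he : μ*(s'*((tgAux - μ)*T + μ*tgAux*s')) = μ*((μ*s-T)*(tgAux*s-T)) := by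
      linear_combination ((tgAux - μ)*T + tgAux*(μ*s' + (μ*s - T))) * hs'
    nlinarith [he, hu2, hμ, mul_nonneg hu2 hμ.le]

lemma step1 (μ s T s' T' : ℝ) (hμ : 0 < μ) (hμg : μ < tgAux)
    (hcrit : μ * (2 + 2*tgAux) ≤ tgAux)
    (hP : TP μ s T) (hs' : (μ+1) * s' = μ * s - T) (hT' : (μ+1) * T' = s + (μ+2)*T) :
    TP μ s' T' := by
  obtain ⟨hs, hC⟩ := hP
  have hss : 0 < s*s := mul_self_pos.mpr hs
  have htg := tgAux_pos
  have h1pos : (0:ℝ) < μ + 1 := by linarith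
  have h2pos : (0:ℝ) < (μ+1)*(μ+1) := mul_pos h1pos h1pos
  obtain ⟨hu0, hu1, hu2⟩ := keyU μ s T hμ hμg hs hC
  have hs'0 : s' ≠ 0 := by
    intro h0; rw [h0, mul_zero] at hs'; exact hu0 (by linarith)
  refine ⟨hs'0, ?_⟩
  rcases hC with ⟨h1, h2⟩ | ⟨h1, h2⟩ | h1
  · -- TC1 → TC2
    refine Or.inr (Or.inl ⟨?_, ?_⟩)
    · -- 0 ≤ s'*(T' - tgAux*s')
      have hK : 0 ≤ (1 - tgAux*μ)*(tgAux - μ) - (μ+2+tgAux)*(μ*tgAux) := by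
        have h2' : μ*(tgAux*tgAux) = μ*(1/2) := by rw [tgAux_sq]
        nlinarith [hcrit]
      have hA : 0 ≤ μ*(s*s) - s*T := by nlinarith [hμ, hss]
      have hB : 0 ≤ -(s*T) := by linarith
      have key3 : 0 ≤ (μ*s - T)*((1 - tgAux*μ)*s + (μ+2+tgAux)*T) := by
        nlinarith [mul_nonneg (by linarith : (0:ℝ) ≤ μ+2+tgAux) (mul_nonneg hA h2),
                   mul_nonneg (mul_nonneg hK hμ.le) (mul_nonneg hss.le hss.le),
                   mul_nonneg (mul_nonneg hK hB) hss.le,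
                   mul_pos (by linarith : (0:ℝ) < tgAux - μ) hss]
      have he : ((μ+1)*(μ+1))*(s'*(T' - tgAux*s')) =
          (μ*s - T)*((1 - tgAux*μ)*s + (μ+2+tgAux)*T) := by
        linear_combination ((μ+1)*T' - tgAux*((μ+1)*s' + (μ*s - T))) * hs' + (μ*s - T) * hT'
      nlinarith [he, key3, h2pos]
    · -- s'*(μ*T' - s') ≤ 0
      have he : ((μ+1)*(μ+1))*(s'*(μ*T' - s')) = ((μ+1)*(μ+1))*((μ*s - T)*T) := by
        linear_combination (μ*(μ+1)*T' - ((μ+1)*s' + (μ*s - T))) * hs' + (μ*(μ*s - T)) * hT'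
      nlinarith [he, hu1, h2pos]
  · -- TC2 → TC3
    refine Or.inr (Or.inr ?_)
    have hA : 0 ≤ s*(T - μ*s) := by nlinarith [h1, hss, hμg]
    have hsplus : 0 ≤ s*(s + T) := by nlinarith [h1, hss, mul_pos htg hss]
    have key23 : (μ*s - T)*(s + T) ≤ 0 := by nlinarith [mul_nonneg hA hsplus, hss]
    show s'*(T' + s') ≤ 0
    have he : ((μ+1)*(μ+1))*(s'*(T' + s')) = (μ+1)*((μ*s - T)*(s + T)) := by
      linear_combination ((μ+1)*T' + ((μ+1)*s' + (μ*s - T))) * hs' + (μ*s - T) * hT'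
    nlinarith [he, key23, h1pos, h2pos]
  · -- TC3 → TC3
    refine Or.inr (Or.inr ?_)
    have h1' : s*(T + s) ≤ 0 := h1
    have hA : 0 ≤ s*(μ*s - T) := by nlinarith [h1', hμ, hss]
    have key23 : (μ*s - T)*(s + T) ≤ 0 := by
      nlinarith [mul_nonneg hA (neg_nonneg.mpr h1'), hss]
    show s'*(T' + s') ≤ 0
    have he : ((μ+1)*(μ+1))*(s'*(T' + s')) = (μ+1)*((μ*s - T)*(s + T)) := by
      linear_combination ((μ+1)*T' + ((μ+1)*s' + (μ*s - T))) * hs' + (μ*s - T) * hT'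
    nlinarith [he, key23, h1pos, h2pos]

lemma keyInd {V : Type*} [Fintype V] [DecidableEq V] (G : SimpleGraph V) [DecidableRel G.Adj]
    (S : ℝ) (w : V → ℝ) (hw : ∀ u v : V, u ≠ v → (G.Adj u v ↔ S < w u + w v))
    (μ : ℝ) (hμ : 0 < μ) (hμg : μ < tgAux) (hcrit : μ * (2 + 2*tgAux) ≤ tgAux)
    (x : V → ℝ) :
    ∀ (n : ℕ) (A : Finset V), A.card = n → ∀ T : ℝ,
      (∀ i ∈ A, μ * x i = (∑ j ∈ A, if G.Adj i j then x j else 0) + T) →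
      ((∑ i ∈ A, x i) = 0 ∧ T = 0 ∨ TP μ (∑ i ∈ A, x i) T) →
      ((∑ i ∈ A, x i) = 0 ∧ T = 0 ∧ ∀ i ∈ A, x i = 0) := by
  intro n
  induction n with
  | zero =>
    intro A hA T _ hQ
    have hAe : A = ∅ := Finset.card_eq_zero.mp hA
    subst hAe
    have hz : (∑ i ∈ (∅ : Finset V), x i) = 0 := Finset.sum_empty
    refine ⟨hz, ?_, by simp⟩
    rcases hQ with ⟨_, hT⟩ | hP
    · exact hT
    · exact absurd hz hP.1
  | succ n ih =>
    intro A hA T hyp hQ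
    have hne : A.Nonempty := Finset.card_pos.mp (by omega)
    obtain ⟨vm, hvmA, hmin⟩ := Finset.exists_min_image A w hne
    by_cases hiso : ∀ j ∈ A, ¬ G.Adj vm j
    · -- vm is isolated within A : peel it, T unchanged
      have hcard : (A.erase vm).card = n := by
        have := Finset.card_erase_of_mem hvmA; omega
      have hsum : ∑ i ∈ A, x i = x vm + ∑ i ∈ A.erase vm, x i :=
        (Finset.add_sum_erase A x hvmA).symm
      have hxv : μ * x vm = T := by
        have h0 := hyp vm hvmA
        rwa [Finset.sum_eq_zero (fun j hj => if_neg (hiso j hj)), zero_add] at h0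
      have hyp' : ∀ i ∈ A.erase vm,
          μ * x i = (∑ j ∈ A.erase vm, if G.Adj i j then x j else 0) + T := by
        intro i hi
        have hiA : i ∈ A := Finset.mem_of_mem_erase hi
        have h0 := hyp i hiA
        rwa [← Finset.add_sum_erase A _ hvmA,
          if_neg (fun hc : G.Adj i vm => hiso i hiA hc.symm), zero_add] at h0
      rcases hQ with ⟨hs0, hT0⟩ | hP
      · have hxv0 : x vm = 0 := by
          have h0 : μ * x vm = 0 := by rw [hxv, hT0]
          exact (mul_eq_zero.mp h0).resolve_left (ne_of_gt hμ)
        have hs'0 : ∑ i ∈ A.erase vm, x i = 0 := by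
          rw [hsum, hxv0, zero_add] at hs0; exact hs0
        obtain ⟨_, _, hall⟩ := ih (A.erase vm) hcard T hyp' (Or.inl ⟨hs'0, hT0⟩)
        refine ⟨hs0, hT0, fun i hi => ?_⟩
        rcases eq_or_ne i vm with rfl | hne'
        · exact hxv0
        · exact hall i (Finset.mem_erase.mpr ⟨hne', hi⟩)
      · have hs'eq : μ * (∑ i ∈ A.erase vm, x i) = μ * (∑ i ∈ A, x i) - T := by
          rw [hsum]; linear_combination -hxv
        have hP' : TP μ (∑ i ∈ A.erase vm, x i) T :=
          step0 μ (∑ i ∈ A, x i) T _ hμ hμg hP hs'eq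
        obtain ⟨hz, _, _⟩ := ih (A.erase vm) hcard T hyp' (Or.inr hP')
        exact absurd hz hP'.1
    · -- the max-weight vertex vM dominates A : peel it
      push_neg at hiso
      obtain ⟨u0, hu0A, hadj⟩ := hiso
      obtain ⟨vM, hvMA, hmax⟩ := Finset.exists_max_image A w hne
      have hdom : ∀ j ∈ A, j ≠ vM → G.Adj vM j := by
        intro j hj hjne
        have h1 := (hw vm u0 (G.ne_of_adj hadj)).mp hadj
        refine (hw vM j (Ne.symm hjne)).mpr ?_
        have h2 := hmin j hj
        have h3 := hmax u0 hu0A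
        linarith
      have hcard : (A.erase vM).card = n := by
        have := Finset.card_erase_of_mem hvMA; omega
      have hsum : ∑ i ∈ A, x i = x vM + ∑ i ∈ A.erase vM, x i :=
        (Finset.add_sum_erase A x hvMA).symm
      have hxv : μ * x vM = (∑ i ∈ A.erase vM, x i) + T := by
        have h0 := hyp vM hvMA
        rw [← Finset.add_sum_erase A _ hvMA, if_neg (G.irrefl), zero_add,
          Finset.sum_congr rfl (fun j hj => if_pos
            (hdom j (Finset.mem_of_mem_erase hj) (Finset.ne_of_mem_erase hj)))] at h0
        exact h0
      have hyp' : ∀ i ∈ A.erase vM,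
          μ * x i = (∑ j ∈ A.erase vM, if G.Adj i j then x j else 0) + (T + x vM) := by
        intro i hi
        have hiA : i ∈ A := Finset.mem_of_mem_erase hi
        have h0 := hyp i hiA
        rw [← Finset.add_sum_erase A _ hvMA,
          if_pos ((hdom i hiA (Finset.ne_of_mem_erase hi)).symm)] at h0
        rw [h0]; ring
      rcases hQ with ⟨hs0, hT0⟩ | hP
      · have hxv0 : x vM = 0 := by
          have h1 : (∑ i ∈ A.erase vM, x i) = - x vM := by rw [hsum] at hs0; linarith
          have h2 : (μ + 1) * x vM = 0 := by
            have := hxv; rw [h1, hT0] at this; linarith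
          exact (mul_eq_zero.mp h2).resolve_left (by positivity)
        have hs'0 : ∑ i ∈ A.erase vM, x i = 0 := by
          rw [hsum, hxv0, zero_add] at hs0; exact hs0
        have hT'0 : T + x vM = 0 := by rw [hxv0, hT0, add_zero]
        obtain ⟨_, _, hall⟩ := ih (A.erase vM) hcard (T + x vM) hyp' (Or.inl ⟨hs'0, hT'0⟩)
        refine ⟨hs0, hT0, fun i hi => ?_⟩
        rcases eq_or_ne i vM with rfl | hne'
        · exact hxv0
        · exact hall i (Finset.mem_erase.mpr ⟨hne', hi⟩)
      · have hs'eq : (μ+1) * (∑ i ∈ A.erase vM, x i) = μ * (∑ i ∈ A, x i) - T := by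
          rw [hsum]; linear_combination -hxv
        have hT'eq : (μ+1) * (T + x vM) = (∑ i ∈ A, x i) + (μ+2)*T := by
          rw [hsum]; linear_combination hxv
        have hP' : TP μ (∑ i ∈ A.erase vM, x i) (T + x vM) :=
          step1 μ (∑ i ∈ A, x i) T _ _ hμ hμg hcrit hP hs'eq hT'eq
        obtain ⟨hz, _, _⟩ := ih (A.erase vM) hcard (T + x vM) hyp' (Or.inr hP')
        exact absurd hz hP'.1

/-- A graph is a threshold graph if adjacency is determined by vertex weights
exceeding a threshold. -/
def SimpleGraph.IsThreshold {V : Type*} (G : SimpleGraph V) : Prop :=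
  ∃ (S : ℝ) (w : V → ℝ), ∀ u v : V, u ≠ v → (G.Adj u v ↔ S < w u + w v)

/-- `μ` is an eigenvalue of the adjacency matrix of `G`. -/
def SimpleGraph.HasAdjEigenvalue {V : Type*} [Fintype V] (G : SimpleGraph V) (μ : ℝ) : Prop :=
  letI := Classical.decEq V
  letI : DecidableRel G.Adj := Classical.decRel _
  ∃ x : V → ℝ, x ≠ 0 ∧ (G.adjMatrix ℝ).mulVec x = μ • x

theorem threshold_positive_eigenvalue_gt {V : Type*} [Fintype V]
    (G : SimpleGraph V) (hG : G.IsThreshold) (μ : ℝ) (hμ : G.HasAdjEigenvalue μ)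
    (hpos : 0 < μ) : (-1 + Real.sqrt 2) / 2 < μ := by
  classical
  by_contra hcon
  push_neg at hcon
  obtain ⟨S, w, hw⟩ := hG
  obtain ⟨x, hx0, hxe⟩ := hμ
  have hsqrt : Real.sqrt 2 * Real.sqrt 2 = 2 := Real.mul_self_sqrt (by norm_num)
  have hsqrt1 : 1 < Real.sqrt 2 := by nlinarith [Real.sqrt_nonneg 2]
  have htgd : tgAux = Real.sqrt 2 / 2 := rfl
  have hμg : μ < tgAux := by rw [htgd]; linarith
  have hcrit : μ * (2 + 2*tgAux) ≤ tgAux := by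
    rw [htgd]
    nlinarith [hcon, hsqrt, hsqrt1, hpos]
  have heq : ∀ i, μ * x i = (∑ j ∈ Finset.univ, if G.Adj i j then x j else 0) + 0 := by
    intro i
    have h0 := congrFun hxe i
    rw [SimpleGraph.adjMatrix_mulVec_apply] at h0
    rw [Pi.smul_apply, smul_eq_mul] at h0
    rw [add_zero, ← h0, SimpleGraph.neighborFinset_eq_filter, Finset.sum_filter]
  have hQ : ((∑ i ∈ Finset.univ, x i) = 0 ∧ (0:ℝ) = 0 ∨
      TP μ (∑ i ∈ Finset.univ, x i) 0) := by
    rcases eq_or_ne (∑ i ∈ Finset.univ, x i) 0 with hz | hz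
    · exact Or.inl ⟨hz, rfl⟩
    · refine Or.inr ⟨hz, Or.inl ⟨by rw [mul_zero], ?_⟩⟩
      have : 0 < (∑ i ∈ Finset.univ, x i) * (∑ i ∈ Finset.univ, x i) :=
        mul_self_pos.mpr hz
      nlinarith [mul_pos hpos tgAux_pos]
  obtain ⟨_, _, hall⟩ := keyInd G S w hw μ hpos hμg hcrit x
    (Finset.univ.card) Finset.univ rfl 0 (fun i _ => heq i) hQ
  exact hx0 (funext fun i => hall i (Finset.mem_univ i))
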